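/- Inverse-probability bound for the action selection kernel. Let A be a finite action set with |A| = K ≥ 2, let μ be a probability measure on a context space X, let f̂ : X × A → [0,1] be measurable, let γ > 0, and let p be the action selection kernel associated with f̂ and γ. Then for every policy π : X → A, the expected inverse probability satisfies V(p, π) := E_{x∼μ}[ 1 / p(π(x)|x) ] ≤ K + γ · E_{x∼μ}[ f̂(x, â(x)) − f̂(x, π(x)) ], where â(x) ∈ argmax_a f̂(x,a); in particular V(p, π) ≤ K + γ·Reg_{f̂}(π). -/

import Mathlib

open Finset MeasureTheory

noncomputable section

/-- The action selection kernel associated with a model `fhat`, a predicted-best-action map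
`ahat`, and exploitation parameter `γ`. -/
def selKernel {X : Type*} (K : ℕ) (fhat : X → Fin K → ℝ) (ahat : X → Fin K)
    (γ : ℝ) (x : X) (a : Fin K) : ℝ :=
  if a = ahat x then
    1 - ∑ a' ∈ univ.filter (· ≠ ahat x), 1 / (K + γ * (fhat x (ahat x) - fhat x a'))
  else 1 / (K + γ * (fhat x (ahat x) - fhat x a))

/-- Inverse-probability bound for the action selection kernel: for every policy `π`,
`V(p, π) = E_{x∼μ}[1/p(π(x)|x)] ≤ K + γ·E_{x∼μ}[fhat(x, ahat x) − fhat(x, π(x))]`,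
i.e. `V(p,π) ≤ K + γ·Reg_{fhat}(π)`. -/
theorem selKernel_inverse_probability_bound {X : Type*} [MeasurableSpace X]
    (μ : Measure X) [IsProbabilityMeasure μ]
    (K : ℕ) (hK : 2 ≤ K)
    (fhat : X → Fin K → ℝ) (hmeas : ∀ a, Measurable fun x => fhat x a)
    (hfhat : ∀ x a, fhat x a ∈ Set.Icc (0:ℝ) 1)
    (γ : ℝ) (hγ : 0 < γ)
    (ahat : X → Fin K) (hahat : ∀ x a, fhat x a ≤ fhat x (ahat x)) :
    ∀ π : X → Fin K, Measurable π →
      ∫ x, 1 / selKernel K fhat ahat γ x (π x) ∂μ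
        ≤ K + γ * ∫ x, (fhat x (ahat x) - fhat x (π x)) ∂μ := by
  intro π hπ
  have hKpos : (0:ℝ) < K := by positivity
  -- D x a := K + γ * (fhat x (ahat x) - fhat x a) ≥ K
  have hD : ∀ x (a : Fin K), (K:ℝ) ≤ K + γ * (fhat x (ahat x) - fhat x a) := by
    intro x a
    nlinarith [hahat x a]
  have hDpos : ∀ x (a : Fin K), (0:ℝ) < K + γ * (fhat x (ahat x) - fhat x a) :=
    fun x a => lt_of_lt_of_le hKpos (hD x a)
  -- lower bound on the diagonal probability
  have hdiag : ∀ x, (1:ℝ)/K ≤ selKernel K fhat ahat γ x (ahat x) := by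
    intro x
    have hsum : ∑ a' ∈ univ.filter (· ≠ ahat x),
        1 / ((K:ℝ) + γ * (fhat x (ahat x) - fhat x a')) ≤ (K - 1) * (1/K) := by
      have hcard : (univ.filter (· ≠ ahat x)).card = K - 1 := by
        rw [filter_ne', card_erase_of_mem (mem_univ _), card_univ, Fintype.card_fin]
      calc ∑ a' ∈ univ.filter (· ≠ ahat x),
          1 / ((K:ℝ) + γ * (fhat x (ahat x) - fhat x a'))
          ≤ ∑ _a' ∈ univ.filter (· ≠ ahat x), (1:ℝ)/K := by
            apply Finset.sum_le_sum
            intro a' _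
            exact one_div_le_one_div_of_le hKpos (hD x a')
        _ = (K - 1) * (1/K) := by
            rw [Finset.sum_const, hcard, nsmul_eq_mul]
            have : (1:ℝ) ≤ (K:ℝ) := by exact_mod_cast Nat.one_le_of_lt hK
            push_cast [Nat.cast_sub (by omega : 1 ≤ K)]
            ring
    have hK1 : (K - 1 : ℝ) * (1/K) = 1 - 1/K := by
      field_simp
    simp only [selKernel, ite_true, eq_self_iff_true, if_true]
    linarith [hsum, hK1 ▸ hsum]
  -- pointwise nonnegativity and bound
  have hnonneg : ∀ x, (0:ℝ) ≤ 1 / selKernel K fhat ahat γ x (π x) := by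
    intro x
    by_cases h : π x = ahat x
    · rw [h]
      exact div_nonneg one_pos.le (le_trans (by positivity) (hdiag x))
    · simp only [selKernel, if_neg h, one_div_one_div]
      exact le_of_lt (hDpos x (π x))
  have hle : ∀ x, 1 / selKernel K fhat ahat γ x (π x)
      ≤ K + γ * (fhat x (ahat x) - fhat x (π x)) := by
    intro x
    by_cases h : π x = ahat x
    · have h1 : (1:ℝ)/K ≤ selKernel K fhat ahat γ x (π x) := h ▸ hdiag x
      have h2 : 1 / selKernel K fhat ahat γ x (π x) ≤ 1 / ((1:ℝ)/K) :=
        one_div_le_one_div_of_le (by positivity) h1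
      rw [one_div_one_div] at h2
      have : fhat x (ahat x) - fhat x (π x) = 0 := by rw [h]; ring
      rw [this, mul_zero, add_zero]
      exact h2
    · simp only [selKernel, if_neg h, one_div_one_div]
      exact le_rfl
  -- measurability of the right-hand side
  haveI : Nonempty (Fin K) := ⟨⟨0, by omega⟩⟩
  have hm1 : Measurable fun x => fhat x (ahat x) := by
    have heq1 : (fun x => fhat x (ahat x)) = fun x => univ.sup' univ_nonempty (fhat x) := by
      funext x
      apply le_antisymm
      · exact Finset.le_sup' (fhat x) (mem_univ _)
      · exact Finset.sup'_le _ _ fun a _ => hahat x a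
    rw [heq1]
    have h := Finset.measurable_sup' (f := fun (a : Fin K) (x : X) => fhat x a)
      univ_nonempty (fun a _ => hmeas a)
    have : (univ.sup' univ_nonempty fun (a : Fin K) (x : X) => fhat x a)
        = fun x => univ.sup' univ_nonempty (fhat x) := by
      funext x
      exact Finset.sup'_apply univ_nonempty _ x
    rwa [this] at h
  have hm2 : Measurable fun x => fhat x (π x) := by
    have heq2 : (fun x => fhat x (π x))
        = fun x => ∑ a : Fin K, if π x = a then fhat x a else 0 := by
      funext x
      rw [Finset.sum_ite_eq univ (π x) (fhat x), if_pos (mem_univ _)]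
    rw [heq2]
    apply Finset.measurable_sum
    intro a _
    exact Measurable.ite (hπ (measurableSet_singleton a)) (hmeas a) measurable_const
  have hIntd : Integrable (fun x => fhat x (ahat x) - fhat x (π x)) μ := by
    refine ⟨(hm1.sub hm2).aestronglyMeasurable, ?_⟩
    apply HasFiniteIntegral.of_bounded (C := 1)
    filter_upwards with x
    have h1 := hfhat x (ahat x)
    have h2 := hfhat x (π x)
    rw [Real.norm_eq_abs, abs_le]
    constructor <;> [skip; skip] <;>
      (simp only [Set.mem_Icc] at h1 h2; linarith)
  have hIntg : Integrable (fun x => (K:ℝ) + γ * (fhat x (ahat x) - fhat x (π x))) μ :=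
    (integrable_const _).add (hIntd.const_mul γ)
  calc ∫ x, 1 / selKernel K fhat ahat γ x (π x) ∂μ
      ≤ ∫ x, ((K:ℝ) + γ * (fhat x (ahat x) - fhat x (π x))) ∂μ := by
        apply integral_mono_of_nonneg
        · filter_upwards with x using hnonneg x
        · exact hIntg
        · filter_upwards with x using hle x
    _ = K + γ * ∫ x, (fhat x (ahat x) - fhat x (π x)) ∂μ := by
        rw [integral_add (integrable_const _) (hIntd.const_mul γ),
          integral_const, integral_const_mul, probReal_univ, smul_eq_mul,
          one_mul]
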